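/- Let k be a field of characteristic ≠ 2 and consider the curve y² = x³ + 2(s⁴+1)x² + (s⁴−1)²x over k(s). The point P = (−(s−i)²(s²−1), −2s(s−i)²(s²−1)), where i² = −1, lies on the curve, and 2P = (−(s²−1)², 0) in the group law. -/

import Mathlib

open WeierstrassCurve Polynomial

private lemma some_eq_some_aux {F : Type*} [Field F] {W : Affine F} {x y x' y' : F}
    (h : W.Nonsingular x y) (h' : W.Nonsingular x' y') (hx : x = x') (hy : y = y') :
    Affine.Point.some _ _ h = Affine.Point.some _ _ h' := by
  subst hx; subst hy; rfl

open Classical in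
/-- Let `k` be a field of characteristic `≠ 2` containing `i` with `i² = −1`, and consider
the curve `y² = x³ + 2(s⁴+1)x² + (s⁴−1)²x` over `k(s)`.  The point
`P = (−(s−i)²(s²−1), −2s(s−i)²(s²−1))` lies on the curve, and `2P = (−(s²−1)², 0)` in the
group law. -/
theorem stmt_14 (k : Type*) [Field k] (h2 : (2 : k) ≠ 0)
    (i : k) (hi : i ^ 2 = -1)
    (s : RatFunc k) (hs : s = RatFunc.X)
    (W : Affine (RatFunc k))
    (hW : W = { a₁ := 0, a₂ := 2 * (s ^ 4 + 1), a₃ := 0,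
                a₄ := (s ^ 4 - 1) ^ 2, a₆ := 0 }) :
    ∃ (hP : W.Nonsingular (-(s - RatFunc.C i) ^ 2 * (s ^ 2 - 1))
              (-2 * s * (s - RatFunc.C i) ^ 2 * (s ^ 2 - 1)))
      (hQ : W.Nonsingular (-(s ^ 2 - 1) ^ 2) 0),
      (2 : ℤ) • Affine.Point.some _ _ hP = Affine.Point.some _ _ hQ := by
  set j : RatFunc k := RatFunc.C i with hjdef
  have hj : j ^ 2 = -1 := by
    rw [hjdef, ← map_pow, hi, map_neg, map_one]
  -- nonzeroness facts
  have htwo : (2 : RatFunc k) ≠ 0 := by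
    have h2' : (2 : k[X]) ≠ 0 := fun h => h2 (by simpa using congrArg (Polynomial.coeff · 0) h)
    have h'' := RatFunc.algebraMap_ne_zero (K := k) h2'
    rwa [map_ofNat] at h''
  have hs0 : s ≠ 0 := by rw [hs]; exact RatFunc.X_ne_zero
  have h1 : s ^ 2 - 1 ≠ 0 := by
    rw [hs]
    have hp : ((X : k[X]) ^ 2 - 1 : k[X]) ≠ 0 := by
      simpa using X_pow_sub_C_ne_zero two_pos (1 : k)
    have h' := RatFunc.algebraMap_ne_zero (K := k) hp
    rwa [map_sub, map_pow, RatFunc.algebraMap_X, map_one] at h'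
  have h3 : s - j ≠ 0 := by
    rw [hs, hjdef]
    have hp : ((X : k[X]) - C i : k[X]) ≠ 0 := X_sub_C_ne_zero i
    have h' := RatFunc.algebraMap_ne_zero (K := k) hp
    rwa [map_sub, RatFunc.algebraMap_X, RatFunc.algebraMap_C] at h'
  -- coordinates
  set x₁ : RatFunc k := -(s - j) ^ 2 * (s ^ 2 - 1) with hx1
  set y₁ : RatFunc k := -2 * s * (s - j) ^ 2 * (s ^ 2 - 1) with hy1
  have hy₁ : y₁ ≠ 0 := by
    rw [hy1]
    exact mul_ne_zero (mul_ne_zero (mul_ne_zero (by simpa using htwo) hs0)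
      (pow_ne_zero 2 h3)) h1
  subst hW
  -- P is nonsingular
  have hP : Affine.Nonsingular
      { a₁ := 0, a₂ := 2 * (s ^ 4 + 1), a₃ := 0, a₄ := (s ^ 4 - 1) ^ 2, a₆ := 0 } x₁ y₁ := by
    rw [Affine.nonsingular_iff, Affine.equation_iff]
    refine ⟨?_, Or.inr ?_⟩
    · show y₁ ^ 2 + 0 * x₁ * y₁ + 0 * y₁ =
        x₁ ^ 3 + 2 * (s ^ 4 + 1) * x₁ ^ 2 + (s ^ 4 - 1) ^ 2 * x₁ + 0
      rw [hx1, hy1]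
      linear_combination (-j^2 - j^4 + 2*s*j + 6*s*j^3 - s^2 - 10*s^2*j^2 + 3*s^2*j^4
        + 6*s^3*j - 18*s^3*j^3 - s^4 + 36*s^4*j^2 - 3*s^4*j^4 - 30*s^5*j + 18*s^5*j^3
        + 9*s^6 - 38*s^6*j^2 + s^6*j^4 + 34*s^7*j - 6*s^7*j^3 - 11*s^8 + 13*s^8*j^2
        - 12*s^9*j + 4*s^10) * hj
    · show y₁ ≠ -y₁ - 0 * x₁ - 0
      intro h
      apply hy₁
      have h2y : (2 : RatFunc k) * y₁ = 0 := by linear_combination h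
      exact (mul_eq_zero.mp h2y).resolve_left htwo
  -- Q is nonsingular
  have hQ : Affine.Nonsingular
      { a₁ := 0, a₂ := 2 * (s ^ 4 + 1), a₃ := 0, a₄ := (s ^ 4 - 1) ^ 2, a₆ := 0 }
      (-(s ^ 2 - 1) ^ 2) 0 := by
    rw [Affine.nonsingular_iff, Affine.equation_iff]
    refine ⟨?_, Or.inl ?_⟩
    · show (0 : RatFunc k) ^ 2 + 0 * (-(s ^ 2 - 1) ^ 2) * 0 + 0 * 0 =
        (-(s ^ 2 - 1) ^ 2) ^ 3 + 2 * (s ^ 4 + 1) * (-(s ^ 2 - 1) ^ 2) ^ 2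
          + (s ^ 4 - 1) ^ 2 * (-(s ^ 2 - 1) ^ 2) + 0
      ring
    · show (0 : RatFunc k) * 0 ≠ 3 * (-(s ^ 2 - 1) ^ 2) ^ 2
        + 2 * (2 * (s ^ 4 + 1)) * (-(s ^ 2 - 1) ^ 2) + (s ^ 4 - 1) ^ 2
      intro h
      have hne : ((2 * s * (s ^ 2 - 1)) : RatFunc k) ≠ 0 :=
        mul_ne_zero (mul_ne_zero htwo hs0) h1
      exact pow_ne_zero 2 hne (by linear_combination h)
  refine ⟨hP, hQ, ?_⟩
  let Wc : Affine (RatFunc k) :=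
    { a₁ := 0, a₂ := 2 * (s ^ 4 + 1), a₃ := 0, a₄ := (s ^ 4 - 1) ^ 2, a₆ := 0 }
  have hWc : Wc = { a₁ := 0, a₂ := 2 * (s ^ 4 + 1), a₃ := 0, a₄ := (s ^ 4 - 1) ^ 2, a₆ := 0 } := rfl
  have hyne : y₁ ≠ Wc.negY x₁ y₁ := by
    show y₁ ≠ -y₁ - Wc.a₁ * x₁ - Wc.a₃
    intro h
    apply hy₁
    have h2y : (2 : RatFunc k) * y₁ = 0 := by
      rw [hWc] at h
      linear_combination h
    exact (mul_eq_zero.mp h2y).resolve_left htwo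
  have hslope : Wc.slope x₁ x₁ y₁ y₁ = j * (s ^ 2 - 1) + 2 * s := by
    rw [Affine.slope_of_Y_ne rfl hyne, div_eq_iff (sub_ne_zero_of_ne hyne)]
    show 3 * x₁ ^ 2 + 2 * Wc.a₂ * x₁ + Wc.a₄ - Wc.a₁ * y₁
      = (j * (s ^ 2 - 1) + 2 * s) * (y₁ - (-y₁ - Wc.a₁ * x₁ - Wc.a₃))
    rw [hWc, hx1, hy1]
    linear_combination (1 + 3*j^2 - 8*s*j + 4*s^2 - 6*s^2*j^2 + 16*s^3*j - 11*s^4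
      + 3*s^4*j^2 - 8*s^5*j + 6*s^6) * hj
  have hxadd : Wc.addX x₁ x₁ (Wc.slope x₁ x₁ y₁ y₁) = -(s ^ 2 - 1) ^ 2 := by
    rw [hslope]
    show (j * (s ^ 2 - 1) + 2 * s) ^ 2 + Wc.a₁ * (j * (s ^ 2 - 1) + 2 * s) - Wc.a₂ - x₁ - x₁
      = -(s ^ 2 - 1) ^ 2
    rw [hWc, hx1]
    linear_combination (s^4 - 1) * hj
  have hyadd : Wc.addY x₁ x₁ y₁ (Wc.slope x₁ x₁ y₁ y₁) = 0 := by
    rw [hslope]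
    simp only [Affine.addY, Affine.negAddY, Affine.addX, Affine.negY]
    show -((j * (s ^ 2 - 1) + 2 * s) * ((j * (s ^ 2 - 1) + 2 * s) ^ 2
          + Wc.a₁ * (j * (s ^ 2 - 1) + 2 * s) - Wc.a₂ - x₁ - x₁ - x₁) + y₁)
        - Wc.a₁ * ((j * (s ^ 2 - 1) + 2 * s) ^ 2
          + Wc.a₁ * (j * (s ^ 2 - 1) + 2 * s) - Wc.a₂ - x₁ - x₁) - Wc.a₃ = 0
    rw [hWc, hx1, hy1]
    linear_combination (-2*j + 4*s + 3*s^2*j - 4*s^3 - s^6*j) * hj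
  rw [two_zsmul, Affine.Point.add_self_of_Y_ne hyne]
  exact some_eq_some_aux _ hQ hxadd hyadd
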